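/- arXiv:2601.22355 — 2 statements merged into one kernel-verified Lean document; each statement's English description precedes it below -/
import Mathlib

section
/- Let μ be a probability measure on ℝ^d with ∫ ‖x‖² dμ(x) < ∞, let φ : ℝ^d → ℝ be a convex differentiable function whose gradient T = ∇φ is measurable and satisfies ∫ ‖T(x)‖² dμ(x) < ∞. Set A := ∫ ‖x‖² dμ, B := ∫ ⟨x, T(x)⟩ dμ, C := ∫ ‖T(x)‖² dμ. For a_1, b_1, a_2, b_2 ≥ 0 define S_j(x) := a_j x + b_j T(x), j = 1, 2. Then the infimum of ∫ ‖x − y‖² dγ(x,y) over all couplings γ of (S_1)_#μ and (S_2)_#μ equals the constant quadratic form (a_1 − a_2)² A + 2(a_1 − a_2)(b_1 − b_2) B + (b_1 − b_2)² C in the coordinate differences; in particular, the squared transport distance between any two points of the filling cone depends only on the differences of their affine coordinates (a, b) through this fixed quadratic form. -/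
open MeasureTheory
open scoped ENNReal

section Aux

variable {E : Type*} [NormedAddCommGroup E] [InnerProductSpace ℝ E] [CompleteSpace E]

lemma grad_convex_ineq {φ : E → ℝ} (hconv : ConvexOn ℝ Set.univ φ)
    (hdiff : Differentiable ℝ φ) (x y : E) :
    φ x + inner ℝ (gradient φ x) (y - x) ≤ φ y := by
  set ψ : ℝ → ℝ := fun t => φ (AffineMap.lineMap x y t) with hψ
  have hψconv : ConvexOn ℝ Set.univ ψ := by
    have := hconv.comp_affineMap (AffineMap.lineMap x y)
    simp only [Set.preimage_univ] at this
    exact this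
  have hline : HasDerivAt (fun t : ℝ => (AffineMap.lineMap x y t : E)) (y - x) 0 := by
    have heq : (fun t : ℝ => (AffineMap.lineMap x y t : E)) = fun t : ℝ => t • (y - x) + x := by
      funext t; simp only [AffineMap.lineMap_apply, vadd_eq_add, vsub_eq_sub]
    rw [heq]
    simpa using ((hasDerivAt_id (0:ℝ)).smul_const (y - x)).add_const x
  have hgrad : HasFDerivAt φ ((InnerProductSpace.toDual ℝ E) (gradient φ x))
      ((AffineMap.lineMap x y (0:ℝ) : E)) := by
    rw [show (AffineMap.lineMap x y (0:ℝ) : E) = x by simp]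
    exact hasGradientAt_iff_hasFDerivAt.1 (hdiff x).hasGradientAt
  have hψd : HasDerivAt ψ (inner ℝ (gradient φ x) (y - x)) 0 := by
    have := hgrad.comp_hasDerivAt (x := (0:ℝ)) hline
    have h2 : HasDerivAt (φ ∘ (AffineMap.lineMap x y : ℝ → E)) (inner ℝ (gradient φ x) (y - x)) 0 := by
      simpa [InnerProductSpace.toDual_apply_apply, real_inner_comm] using this
    exact h2
  have hsl := ConvexOn.le_slope_of_hasDerivAt hψconv (Set.mem_univ (0:ℝ)) (Set.mem_univ (1:ℝ))
    zero_lt_one hψd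
  have hs : slope ψ 0 1 = ψ 1 - ψ 0 := by simp [slope_def_field]
  rw [hs] at hsl
  have h0 : ψ 0 = φ x := by simp [hψ]
  have h1 : ψ 1 = φ y := by simp [hψ]
  linarith

variable [MeasurableSpace E] [BorelSpace E] [SecondCountableTopology E]

set_option maxHeartbeats 1000000 in
lemma transport_cost_general (μ : Measure E) [IsProbabilityMeasure μ]
    (hμ2 : ∫⁻ x, ENNReal.ofReal (‖x‖ ^ 2) ∂μ < ⊤)
    (φ : E → ℝ)
    (hconv : ConvexOn ℝ Set.univ φ) (hdiff : Differentiable ℝ φ)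
    (hTmeas : Measurable fun x => gradient φ x)
    (hT2 : ∫⁻ x, ENNReal.ofReal (‖gradient φ x‖ ^ 2) ∂μ < ⊤)
    (a₁ b₁ a₂ b₂ : ℝ) (ha₁ : 0 ≤ a₁) (hb₁ : 0 ≤ b₁) (ha₂ : 0 ≤ a₂) (hb₂ : 0 ≤ b₂)
    (S₁ S₂ : E → E)
    (hS₁ : ∀ x, S₁ x = a₁ • x + b₁ • gradient φ x)
    (hS₂ : ∀ x, S₂ x = a₂ • x + b₂ • gradient φ x) :
    sInf {c : ℝ≥0∞ |
        ∃ γ : Measure (E × E),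
          IsProbabilityMeasure γ ∧ γ.map Prod.fst = μ.map S₁ ∧
          γ.map Prod.snd = μ.map S₂ ∧
          c = ∫⁻ p, ENNReal.ofReal (‖p.1 - p.2‖ ^ 2) ∂γ}
      = ENNReal.ofReal (∫ x, ‖S₁ x - S₂ x‖ ^ 2 ∂μ) := by
  classical
  have hgi : ∀ x y : E, φ x + inner ℝ (gradient φ x) (y - x) ≤ φ y :=
    grad_convex_ineq hconv hdiff
  -- measurability
  have hS₁m : Measurable S₁ := by
    have h : S₁ = fun x => a₁ • x + b₁ • gradient φ x := funext hS₁
    rw [h]; exact (measurable_id.const_smul a₁).add (hTmeas.const_smul b₁)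
  have hS₂m : Measurable S₂ := by
    have h : S₂ = fun x => a₂ • x + b₂ • gradient φ x := funext hS₂
    rw [h]; exact (measurable_id.const_smul a₂).add (hTmeas.const_smul b₂)
  -- basic integrability
  have i_nx2 : Integrable (fun x : E => ‖x‖ ^ 2) μ :=
    ⟨(measurable_norm.pow_const 2).aestronglyMeasurable,
      (hasFiniteIntegral_iff_ofReal (ae_of_all _ fun x => by positivity)).2 hμ2⟩
  have i_nT2 : Integrable (fun x : E => ‖gradient φ x‖ ^ 2) μ :=
    ⟨(hTmeas.norm.pow_const 2).aestronglyMeasurable,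
      (hasFiniteIntegral_iff_ofReal (ae_of_all _ fun x => by positivity)).2 hT2⟩
  have i_xT : Integrable (fun x : E => (inner ℝ x (gradient φ x) : ℝ)) μ := by
    refine Integrable.mono' (i_nx2.add i_nT2)
      ((measurable_id.inner hTmeas).aestronglyMeasurable) (ae_of_all _ fun x => ?_)
    have h1 := abs_real_inner_le_norm (x : E) (gradient φ x)
    have h2 : ‖x‖ * ‖gradient φ x‖ ≤ ‖x‖ ^ 2 + ‖gradient φ x‖ ^ 2 := by
      nlinarith [sq_nonneg (‖x‖ - ‖gradient φ x‖), norm_nonneg x, norm_nonneg (gradient φ x)]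
    calc ‖(inner ℝ x (gradient φ x) : ℝ)‖ = |(inner ℝ x (gradient φ x) : ℝ)| := rfl
      _ ≤ ‖x‖ * ‖gradient φ x‖ := h1
      _ ≤ ‖x‖ ^ 2 + ‖gradient φ x‖ ^ 2 := h2
  have i_norm : Integrable (fun x : E => ‖x‖) μ := by
    refine Integrable.mono' ((integrable_const (1:ℝ)).add i_nx2)
      measurable_norm.aestronglyMeasurable (ae_of_all _ fun x => ?_)
    have := norm_nonneg x
    simp only [norm_norm, Pi.add_apply]
    nlinarith [sq_nonneg (‖x‖ - 1)]
  have i_Tnorm : Integrable (fun x : E => ‖gradient φ x‖) μ := by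
    refine Integrable.mono' ((integrable_const (1:ℝ)).add i_nT2)
      hTmeas.norm.aestronglyMeasurable (ae_of_all _ fun x => ?_)
    have := norm_nonneg (gradient φ x)
    simp only [norm_norm, Pi.add_apply]
    nlinarith [sq_nonneg (‖gradient φ x‖ - 1)]
  have i_phi : Integrable φ μ := by
    refine Integrable.mono'
      (((integrable_const (|φ 0|)).add (i_nx2.add i_nT2)).add (i_norm.const_mul (‖gradient φ 0‖)))
      hdiff.continuous.aestronglyMeasurable (ae_of_all _ fun x => ?_)
    have hub : φ x ≤ φ 0 + inner ℝ x (gradient φ x) := by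
      have := hgi x 0
      have e : (inner ℝ (gradient φ x) ((0:E) - x) : ℝ) = -(inner ℝ x (gradient φ x) : ℝ) := by
        rw [inner_sub_right, inner_zero_right, real_inner_comm]; ring
      rw [e] at this; linarith
    have hlb : φ 0 + inner ℝ (gradient φ 0) x ≤ φ x := by
      have := hgi 0 x
      rw [sub_zero] at this; exact this
    have b1 : |(inner ℝ x (gradient φ x) : ℝ)| ≤ ‖x‖ ^ 2 + ‖gradient φ x‖ ^ 2 := by
      have h1 := abs_real_inner_le_norm (x : E) (gradient φ x)
      nlinarith [sq_nonneg (‖x‖ - ‖gradient φ x‖)]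
    have b2 : |(inner ℝ (gradient φ 0) x : ℝ)| ≤ ‖gradient φ 0‖ * ‖x‖ :=
      abs_real_inner_le_norm _ _
    simp only [Pi.add_apply]
    rw [Real.norm_eq_abs, abs_le]
    constructor
    · have := abs_nonneg (φ 0)
      have := abs_le.1 b2
      nlinarith [abs_le.1 b1, neg_abs_le (φ 0), le_abs_self (φ 0)]
    · have := abs_le.1 b2
      nlinarith [abs_le.1 b1, neg_abs_le (φ 0), le_abs_self (φ 0)]
  -- the potentials f and g
  set fF : E → ℝ := fun x => a₁*a₂/2*‖x‖^2 + a₁*b₂*φ x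
      + a₂*b₁*((inner ℝ x (gradient φ x) : ℝ) - φ x) + b₁*b₂/2*‖gradient φ x‖^2 with hfF
  set gG : E → ℝ := fun x => a₁*a₂/2*‖x‖^2 + a₂*b₁*φ x
      + a₁*b₂*((inner ℝ x (gradient φ x) : ℝ) - φ x) + b₁*b₂/2*‖gradient φ x‖^2 with hgG
  have i_f : Integrable fF μ := by
    apply Integrable.add
    apply Integrable.add
    apply Integrable.add
    · exact i_nx2.const_mul _
    · exact i_phi.const_mul _
    · exact (i_xT.sub i_phi).const_mul _
    · exact i_nT2.const_mul _
  have i_g : Integrable gG μ := by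
    apply Integrable.add
    apply Integrable.add
    apply Integrable.add
    · exact i_nx2.const_mul _
    · exact i_phi.const_mul _
    · exact (i_xT.sub i_phi).const_mul _
    · exact i_nT2.const_mul _
  have hexp : ∀ x y : E, (inner ℝ (S₁ x) (S₂ y) : ℝ)
      = a₁*a₂*(inner ℝ x y : ℝ) + a₁*b₂*(inner ℝ x (gradient φ y) : ℝ)
        + a₂*b₁*(inner ℝ (gradient φ x) y : ℝ)
        + b₁*b₂*(inner ℝ (gradient φ x) (gradient φ y) : ℝ) := by
    intro x y
    rw [hS₁ x, hS₂ y]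
    simp only [inner_add_left, inner_add_right, real_inner_smul_left, real_inner_smul_right]
    ring
  have hkey : ∀ x y : E, (inner ℝ (S₁ x) (S₂ y) : ℝ) ≤ fF x + gG y := by
    intro x y
    have h1 : (inner ℝ x y : ℝ) ≤ (‖x‖^2 + ‖y‖^2)/2 := by
      nlinarith [real_inner_le_norm (x : E) y, sq_nonneg (‖x‖ - ‖y‖)]
    have h4 : (inner ℝ (gradient φ x) (gradient φ y) : ℝ)
        ≤ (‖gradient φ x‖^2 + ‖gradient φ y‖^2)/2 := by
      nlinarith [real_inner_le_norm (gradient φ x) (gradient φ y),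
        sq_nonneg (‖gradient φ x‖ - ‖gradient φ y‖)]
    have h2 : (inner ℝ x (gradient φ y) : ℝ) ≤ φ x - φ y + (inner ℝ y (gradient φ y) : ℝ) := by
      have := hgi y x
      have e : (inner ℝ (gradient φ y) (x - y) : ℝ)
          = (inner ℝ x (gradient φ y) : ℝ) - (inner ℝ y (gradient φ y) : ℝ) := by
        rw [inner_sub_right, real_inner_comm, real_inner_comm y (gradient φ y)]
      rw [e] at this; linarith
    have h3 : (inner ℝ (gradient φ x) y : ℝ) ≤ φ y - φ x + (inner ℝ x (gradient φ x) : ℝ) := by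
      have := hgi x y
      have e : (inner ℝ (gradient φ x) (y - x) : ℝ)
          = (inner ℝ (gradient φ x) y : ℝ) - (inner ℝ x (gradient φ x) : ℝ) := by
        rw [inner_sub_right, real_inner_comm x (gradient φ x)]
      rw [e] at this; linarith
    have c1 := mul_le_mul_of_nonneg_left h1 (mul_nonneg ha₁ ha₂)
    have c2 := mul_le_mul_of_nonneg_left h2 (mul_nonneg ha₁ hb₂)
    have c3 := mul_le_mul_of_nonneg_left h3 (mul_nonneg ha₂ hb₁)
    have c4 := mul_le_mul_of_nonneg_left h4 (mul_nonneg hb₁ hb₂)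
    rw [hexp x y, hfF, hgG]
    simp only []
    nlinarith [c1, c2, c3, c4]
  have hkeyeq : ∀ x : E, fF x + gG x = (inner ℝ (S₁ x) (S₂ x) : ℝ) := by
    intro x
    rw [hexp x x, hfF, hgG]
    simp only []
    rw [real_inner_self_eq_norm_sq (x : E), real_inner_self_eq_norm_sq (gradient φ x),
      real_inner_comm (gradient φ x) x]
    ring
  -- expansion of the squared distance between S₁ x and S₂ x
  have hcost_eq : ∀ x : E, ‖S₁ x - S₂ x‖ ^ 2
      = (a₁ - a₂)^2*‖x‖^2 + 2*(a₁-a₂)*(b₁-b₂)*(inner ℝ x (gradient φ x) : ℝ)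
        + (b₁-b₂)^2*‖gradient φ x‖^2 := by
    intro x
    have hd : S₁ x - S₂ x = (a₁ - a₂) • x + (b₁ - b₂) • gradient φ x := by
      rw [hS₁ x, hS₂ x]; module
    rw [hd, @norm_add_sq_real, norm_smul, norm_smul, real_inner_smul_left,
      real_inner_smul_right]
    simp only [Real.norm_eq_abs, mul_pow, sq_abs]
    ring
  have i_cost : Integrable (fun x : E => ‖S₁ x - S₂ x‖ ^ 2) μ := by
    have h : (fun x : E => ‖S₁ x - S₂ x‖ ^ 2)
        = fun x : E => (a₁ - a₂)^2*‖x‖^2 + 2*(a₁-a₂)*(b₁-b₂)*(inner ℝ x (gradient φ x) : ℝ)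
          + (b₁-b₂)^2*‖gradient φ x‖^2 := funext hcost_eq
    rw [h]
    exact ((i_nx2.const_mul _).add (i_xT.const_mul _)).add (i_nT2.const_mul _)
  -- upper bound: explicit coupling
  have hpairm : Measurable fun x : E => (S₁ x, S₂ x) := hS₁m.prodMk hS₂m
  have hcostm : Measurable fun p : E × E => ‖p.1 - p.2‖ ^ 2 :=
    ((measurable_fst.sub measurable_snd).norm.pow_const 2)
  have hmem : ENNReal.ofReal (∫ x, ‖S₁ x - S₂ x‖ ^ 2 ∂μ) ∈ {c : ℝ≥0∞ |
      ∃ γ : Measure (E × E),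
        IsProbabilityMeasure γ ∧ γ.map Prod.fst = μ.map S₁ ∧
        γ.map Prod.snd = μ.map S₂ ∧
        c = ∫⁻ p, ENNReal.ofReal (‖p.1 - p.2‖ ^ 2) ∂γ} := by
    refine ⟨μ.map (fun x => (S₁ x, S₂ x)), Measure.isProbabilityMeasure_map hpairm.aemeasurable,
      ?_, ?_, ?_⟩
    · rw [Measure.map_map measurable_fst hpairm]; rfl
    · rw [Measure.map_map measurable_snd hpairm]; rfl
    · rw [lintegral_map (hcostm.ennreal_ofReal) hpairm]
      exact ofReal_integral_eq_lintegral_ofReal i_cost (ae_of_all _ fun x => by positivity)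
  refine le_antisymm (sInf_le hmem) (le_sInf ?_)
  rintro c ⟨γ, hγp, hγ1, hγ2, rfl⟩
  by_cases htop : ∫⁻ p, ENNReal.ofReal (‖p.1 - p.2‖ ^ 2) ∂γ = ⊤
  · rw [htop]; exact le_top
  have i_costγ : Integrable (fun p : E × E => ‖p.1 - p.2‖ ^ 2) γ :=
    ⟨hcostm.aestronglyMeasurable,
      (hasFiniteIntegral_iff_ofReal (ae_of_all _ fun p => by positivity)).2
        (lt_top_iff_ne_top.2 htop)⟩
  rw [← ofReal_integral_eq_lintegral_ofReal i_costγ (ae_of_all _ fun p => by positivity)]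
  apply ENNReal.ofReal_le_ofReal
  -- EReal-valued Fenchel potentials
  set G : E → EReal := fun y => ⨆ x : E, (((inner ℝ (S₁ x) y : ℝ) - fF x : ℝ) : EReal) with hGdef
  have hGlsc : LowerSemicontinuous G := by
    apply lowerSemicontinuous_iSup
    intro x
    exact (continuous_coe_real_ereal.comp
      ((continuous_const.inner continuous_id).sub continuous_const)).lowerSemicontinuous
  have hGlb : ∀ y, (((inner ℝ (S₁ 0) y : ℝ) - fF 0 : ℝ) : EReal) ≤ G y := fun y =>
    le_iSup (fun x : E => (((inner ℝ (S₁ x) y : ℝ) - fF x : ℝ) : EReal)) 0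
  have hGbot : ∀ y, G y ≠ ⊥ := fun y h => (EReal.bot_lt_coe _).not_ge (h ▸ hGlb y)
  have hGub : ∀ x', G (S₂ x') ≤ ((gG x' : ℝ) : EReal) := by
    intro x'
    refine iSup_le fun x => ?_
    have h : (inner ℝ (S₁ x) (S₂ x') : ℝ) - fF x ≤ gG x' := by linarith [hkey x x']
    exact_mod_cast h
  set F : E → EReal := fun y => ⨆ z : E, (((inner ℝ y z : ℝ) : EReal) - G z) with hFdef
  have hFen : ∀ y z : E, ((inner ℝ y z : ℝ) : EReal) - G z ≤ F y := fun y z =>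
    le_iSup (fun z : E => (((inner ℝ y z : ℝ) : EReal) - G z)) z
  have hFub : ∀ x, F (S₁ x) ≤ ((fF x : ℝ) : EReal) := by
    intro x
    refine iSup_le fun z => ?_
    have h := le_iSup (fun x' : E => (((inner ℝ (S₁ x') z : ℝ) - fF x' : ℝ) : EReal)) x
    calc ((inner ℝ (S₁ x) z : ℝ) : EReal) - G z
        ≤ ((inner ℝ (S₁ x) z : ℝ) : EReal) - (((inner ℝ (S₁ x) z : ℝ) - fF x : ℝ) : EReal) :=
          EReal.sub_le_sub le_rfl h
      _ = ((fF x : ℝ) : EReal) := by rw [← EReal.coe_sub]; norm_num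
  have hFlb : ∀ y, (((inner ℝ y (S₂ 0) : ℝ) - gG 0 : ℝ) : EReal) ≤ F y := by
    intro y
    refine le_trans ?_ (hFen y (S₂ 0))
    rw [EReal.coe_sub]
    exact EReal.sub_le_sub le_rfl (hGub 0)
  have hFbot : ∀ y, F y ≠ ⊥ := fun y h => (EReal.bot_lt_coe _).not_ge (h ▸ hFlb y)
  have hFlsc : LowerSemicontinuous F := by
    apply lowerSemicontinuous_iSup
    intro z
    by_cases hz : G z = ⊤
    · have he : (fun y : E => ((inner ℝ y z : ℝ) : EReal) - G z) = fun _ => (⊥ : EReal) := by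
        funext y; rw [hz, EReal.sub_top]
      rw [he]; exact lowerSemicontinuous_const
    · have hzr : ((G z).toReal : EReal) = G z := EReal.coe_toReal hz (hGbot z)
      have he : (fun y : E => ((inner ℝ y z : ℝ) : EReal) - G z)
          = fun y : E => (((inner ℝ y z : ℝ) - (G z).toReal : ℝ) : EReal) := by
        funext y; rw [EReal.coe_sub, hzr]
      rw [he]
      exact (continuous_coe_real_ereal.comp
        ((continuous_id.inner continuous_const).sub continuous_const)).lowerSemicontinuous
  have hGmeas : Measurable G := hGlsc.measurable
  have hFmeas : Measurable F := hFlsc.measurable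
  set F' : E → ℝ := fun y => (F y).toReal with hF'def
  set G' : E → ℝ := fun y => (G y).toReal with hG'def
  have hF'meas : Measurable F' := measurable_ereal_toReal.comp hFmeas
  have hG'meas : Measurable G' := measurable_ereal_toReal.comp hGmeas
  have hFS₁top : ∀ x, F (S₁ x) ≠ ⊤ := fun x => ((hFub x).trans_lt (EReal.coe_lt_top _)).ne
  have hGS₂top : ∀ x, G (S₂ x) ≠ ⊤ := fun x => ((hGub x).trans_lt (EReal.coe_lt_top _)).ne
  have haeF : ∀ᵐ p ∂γ, F p.1 ≠ ⊤ := by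
    have hset : MeasurableSet {y : E | F y = ⊤} := hFmeas (measurableSet_singleton ⊤)
    have h0 : γ {p : E × E | F p.1 = ⊤} = 0 := by
      have he : {p : E × E | F p.1 = ⊤} = Prod.fst ⁻¹' {y : E | F y = ⊤} := rfl
      rw [he, ← Measure.map_apply measurable_fst hset, hγ1, Measure.map_apply hS₁m hset]
      have hemp : S₁ ⁻¹' {y : E | F y = ⊤} = ∅ := by
        ext x; simp [hFS₁top x]
      rw [hemp, measure_empty]
    rw [ae_iff]; simpa using h0
  have haeG : ∀ᵐ p ∂γ, G p.2 ≠ ⊤ := by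
    have hset : MeasurableSet {y : E | G y = ⊤} := hGmeas (measurableSet_singleton ⊤)
    have h0 : γ {p : E × E | G p.2 = ⊤} = 0 := by
      have he : {p : E × E | G p.2 = ⊤} = Prod.snd ⁻¹' {y : E | G y = ⊤} := rfl
      rw [he, ← Measure.map_apply measurable_snd hset, hγ2, Measure.map_apply hS₂m hset]
      have hemp : S₂ ⁻¹' {y : E | G y = ⊤} = ∅ := by
        ext x; simp [hGS₂top x]
      rw [hemp, measure_empty]
    rw [ae_iff]; simpa using h0
  have hF'ub : ∀ x, F' (S₁ x) ≤ fF x := by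
    intro x
    have h := EReal.toReal_le_toReal (hFub x) (hFbot _) (EReal.coe_ne_top _)
    simpa using h
  have hG'ub : ∀ x, G' (S₂ x) ≤ gG x := by
    intro x
    have h := EReal.toReal_le_toReal (hGub x) (hGbot _) (EReal.coe_ne_top _)
    simpa using h
  have hF'lb : ∀ y, F y ≠ ⊤ → (inner ℝ y (S₂ 0) : ℝ) - gG 0 ≤ F' y := by
    intro y hy
    have h := EReal.toReal_le_toReal (hFlb y) (EReal.coe_ne_bot _) hy
    rwa [EReal.toReal_coe] at h
  have hG'lb : ∀ y, G y ≠ ⊤ → (inner ℝ (S₁ 0) y : ℝ) - fF 0 ≤ G' y := by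
    intro y hy
    have h := EReal.toReal_le_toReal (hGlb y) (EReal.coe_ne_bot _) hy
    rwa [EReal.toReal_coe] at h
  have hRF : ∀ p : E × E, F p.1 ≠ ⊤ → G p.2 ≠ ⊤ →
      (inner ℝ p.1 p.2 : ℝ) ≤ F' p.1 + G' p.2 := by
    intro p h1 h2
    have hg : ((G' p.2 : ℝ) : EReal) = G p.2 := EReal.coe_toReal h2 (hGbot _)
    have hfe := hFen p.1 p.2
    rw [← hg, ← EReal.coe_sub] at hfe
    have h := EReal.toReal_le_toReal hfe (EReal.coe_ne_bot _) h1
    simp only [EReal.toReal_coe] at h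
    linarith
  -- integrability of the potentials along the maps
  have i_ic1 : Integrable (fun x : E => (inner ℝ (S₁ x) (S₂ 0) : ℝ)) μ := by
    refine Integrable.mono'
      ((i_norm.const_mul (‖S₂ 0‖ * a₁)).add (i_Tnorm.const_mul (‖S₂ 0‖ * b₁)))
      ((hS₁m.inner measurable_const).aestronglyMeasurable) (ae_of_all _ fun x => ?_)
    simp only [Pi.add_apply]
    have h1 : ‖(inner ℝ (S₁ x) (S₂ 0) : ℝ)‖ ≤ ‖S₁ x‖ * ‖S₂ 0‖ := norm_inner_le_norm _ _
    have h2 : ‖S₁ x‖ ≤ a₁ * ‖x‖ + b₁ * ‖gradient φ x‖ := by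
      rw [hS₁ x]
      refine (norm_add_le _ _).trans ?_
      rw [norm_smul, norm_smul, Real.norm_eq_abs, Real.norm_eq_abs,
        abs_of_nonneg ha₁, abs_of_nonneg hb₁]
    have h3 : (0:ℝ) ≤ ‖S₂ 0‖ := norm_nonneg _
    nlinarith [norm_nonneg (S₁ x)]
  have i_ic2 : Integrable (fun x : E => (inner ℝ (S₁ 0) (S₂ x) : ℝ)) μ := by
    refine Integrable.mono'
      ((i_norm.const_mul (‖S₁ 0‖ * a₂)).add (i_Tnorm.const_mul (‖S₁ 0‖ * b₂)))
      ((measurable_const.inner hS₂m).aestronglyMeasurable) (ae_of_all _ fun x => ?_)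
    simp only [Pi.add_apply]
    have h1 : ‖(inner ℝ (S₁ 0) (S₂ x) : ℝ)‖ ≤ ‖S₁ 0‖ * ‖S₂ x‖ := norm_inner_le_norm _ _
    have h2 : ‖S₂ x‖ ≤ a₂ * ‖x‖ + b₂ * ‖gradient φ x‖ := by
      rw [hS₂ x]
      refine (norm_add_le _ _).trans ?_
      rw [norm_smul, norm_smul, Real.norm_eq_abs, Real.norm_eq_abs,
        abs_of_nonneg ha₂, abs_of_nonneg hb₂]
    have h3 : (0:ℝ) ≤ ‖S₁ 0‖ := norm_nonneg _
    nlinarith [norm_nonneg (S₂ x)]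
  have i_F'S₁ : Integrable (fun x : E => F' (S₁ x)) μ := by
    refine Integrable.mono' (i_f.abs.add ((i_ic1.sub (integrable_const (gG 0))).abs))
      ((hF'meas.comp hS₁m).aestronglyMeasurable) (ae_of_all _ fun x => ?_)
    show ‖F' (S₁ x)‖ ≤ |fF x| + |(inner ℝ (S₁ x) (S₂ 0) : ℝ) - gG 0|
    have hu := hF'ub x
    have hl := hF'lb (S₁ x) (hFS₁top x)
    rw [Real.norm_eq_abs, abs_le]
    constructor
    · have := neg_abs_le ((inner ℝ (S₁ x) (S₂ 0) : ℝ) - gG 0)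
      have := abs_nonneg (fF x)
      linarith
    · have := le_abs_self (fF x)
      have := abs_nonneg ((inner ℝ (S₁ x) (S₂ 0) : ℝ) - gG 0)
      linarith
  have i_G'S₂ : Integrable (fun x : E => G' (S₂ x)) μ := by
    refine Integrable.mono' (i_g.abs.add ((i_ic2.sub (integrable_const (fF 0))).abs))
      ((hG'meas.comp hS₂m).aestronglyMeasurable) (ae_of_all _ fun x => ?_)
    show ‖G' (S₂ x)‖ ≤ |gG x| + |(inner ℝ (S₁ 0) (S₂ x) : ℝ) - fF 0|
    have hu := hG'ub x
    have hl := hG'lb (S₂ x) (hGS₂top x)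
    rw [Real.norm_eq_abs, abs_le]
    constructor
    · have := neg_abs_le ((inner ℝ (S₁ 0) (S₂ x) : ℝ) - fF 0)
      have := abs_nonneg (gG x)
      linarith
    · have := le_abs_self (gG x)
      have := abs_nonneg ((inner ℝ (S₁ 0) (S₂ x) : ℝ) - fF 0)
      linarith
  -- transfer lemmas between γ and μ
  have t_fst : ∀ h : E → ℝ, Measurable h → Integrable (fun x => h (S₁ x)) μ →
      Integrable (fun p : E × E => h p.1) γ := by
    intro h hm hi
    have h1 : Integrable h (μ.map S₁) :=
      (integrable_map_measure hm.aestronglyMeasurable hS₁m.aemeasurable).2 hi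
    rw [← hγ1] at h1
    exact (integrable_map_measure hm.aestronglyMeasurable measurable_fst.aemeasurable).1 h1
  have t_snd : ∀ h : E → ℝ, Measurable h → Integrable (fun x => h (S₂ x)) μ →
      Integrable (fun p : E × E => h p.2) γ := by
    intro h hm hi
    have h1 : Integrable h (μ.map S₂) :=
      (integrable_map_measure hm.aestronglyMeasurable hS₂m.aemeasurable).2 hi
    rw [← hγ2] at h1
    exact (integrable_map_measure hm.aestronglyMeasurable measurable_snd.aemeasurable).1 h1
  have e_fst : ∀ h : E → ℝ, Measurable h → ∫ p, h p.1 ∂γ = ∫ x, h (S₁ x) ∂μ := by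
    intro h hm
    have h1 : ∫ p, h p.1 ∂γ = ∫ y, h y ∂(γ.map Prod.fst) :=
      (integral_map measurable_fst.aemeasurable hm.aestronglyMeasurable).symm
    rw [h1, hγ1, integral_map hS₁m.aemeasurable hm.aestronglyMeasurable]
  have e_snd : ∀ h : E → ℝ, Measurable h → ∫ p, h p.2 ∂γ = ∫ x, h (S₂ x) ∂μ := by
    intro h hm
    have h1 : ∫ p, h p.2 ∂γ = ∫ y, h y ∂(γ.map Prod.snd) :=
      (integral_map measurable_snd.aemeasurable hm.aestronglyMeasurable).symm
    rw [h1, hγ2, integral_map hS₂m.aemeasurable hm.aestronglyMeasurable]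
  have i_S1sq : Integrable (fun x : E => ‖S₁ x‖ ^ 2) μ := by
    have h : (fun x : E => ‖S₁ x‖ ^ 2) = fun x : E => a₁^2*‖x‖^2
        + 2*a₁*b₁*(inner ℝ x (gradient φ x) : ℝ) + b₁^2*‖gradient φ x‖^2 := by
      funext x
      rw [hS₁ x, @norm_add_sq_real, norm_smul, norm_smul, real_inner_smul_left,
        real_inner_smul_right]
      simp only [Real.norm_eq_abs, mul_pow, sq_abs]
      ring
    rw [h]
    exact ((i_nx2.const_mul _).add (i_xT.const_mul _)).add (i_nT2.const_mul _)
  have i_S2sq : Integrable (fun x : E => ‖S₂ x‖ ^ 2) μ := by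
    have h : (fun x : E => ‖S₂ x‖ ^ 2) = fun x : E => a₂^2*‖x‖^2
        + 2*a₂*b₂*(inner ℝ x (gradient φ x) : ℝ) + b₂^2*‖gradient φ x‖^2 := by
      funext x
      rw [hS₂ x, @norm_add_sq_real, norm_smul, norm_smul, real_inner_smul_left,
        real_inner_smul_right]
      simp only [Real.norm_eq_abs, mul_pow, sq_abs]
      ring
    rw [h]
    exact ((i_nx2.const_mul _).add (i_xT.const_mul _)).add (i_nT2.const_mul _)
  have i_n1γ : Integrable (fun p : E × E => ‖p.1‖ ^ 2) γ :=
    t_fst _ (measurable_norm.pow_const 2) i_S1sq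
  have i_n2γ : Integrable (fun p : E × E => ‖p.2‖ ^ 2) γ :=
    t_snd _ (measurable_norm.pow_const 2) i_S2sq
  have i_F'γ : Integrable (fun p : E × E => F' p.1) γ := t_fst F' hF'meas i_F'S₁
  have i_G'γ : Integrable (fun p : E × E => G' p.2) γ := t_snd G' hG'meas i_G'S₂
  have i_ipγ : Integrable (fun p : E × E => (inner ℝ p.1 p.2 : ℝ)) γ := by
    refine Integrable.mono' (i_n1γ.add i_n2γ) continuous_inner.aestronglyMeasurable
      (ae_of_all _ fun p => ?_)
    simp only [Pi.add_apply]
    have h1 : ‖(inner ℝ p.1 p.2 : ℝ)‖ ≤ ‖p.1‖ * ‖p.2‖ := norm_inner_le_norm _ _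
    nlinarith [sq_nonneg (‖p.1‖ - ‖p.2‖), norm_nonneg p.1, norm_nonneg p.2]
  have i_SS : Integrable (fun x : E => (inner ℝ (S₁ x) (S₂ x) : ℝ)) μ :=
    (i_f.add i_g).congr (ae_of_all _ fun x => by simpa [Pi.add_apply] using hkeyeq x)
  -- the main estimate
  have hinle : ∫ p, (inner ℝ p.1 p.2 : ℝ) ∂γ ≤ ∫ x, (inner ℝ (S₁ x) (S₂ x) : ℝ) ∂μ := by
    have step1 : ∫ p, (inner ℝ p.1 p.2 : ℝ) ∂γ ≤ ∫ p, (F' p.1 + G' p.2) ∂γ := by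
      refine integral_mono_ae i_ipγ (i_F'γ.add i_G'γ) ?_
      filter_upwards [haeF, haeG] with p h1 h2
      simpa [Pi.add_apply] using hRF p h1 h2
    have step2 : ∫ p, (F' p.1 + G' p.2) ∂γ = (∫ p, F' p.1 ∂γ) + ∫ p, G' p.2 ∂γ :=
      integral_add i_F'γ i_G'γ
    have step3 : ∫ p, F' p.1 ∂γ = ∫ x, F' (S₁ x) ∂μ := e_fst F' hF'meas
    have step4 : ∫ p, G' p.2 ∂γ = ∫ x, G' (S₂ x) ∂μ := e_snd G' hG'meas
    have step5 : ∫ x, F' (S₁ x) ∂μ ≤ ∫ x, fF x ∂μ :=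
      integral_mono i_F'S₁ i_f fun x => hF'ub x
    have step6 : ∫ x, G' (S₂ x) ∂μ ≤ ∫ x, gG x ∂μ :=
      integral_mono i_G'S₂ i_g fun x => hG'ub x
    have step7 : (∫ x, fF x ∂μ) + (∫ x, gG x ∂μ) = ∫ x, (inner ℝ (S₁ x) (S₂ x) : ℝ) ∂μ := by
      rw [← integral_add i_f i_g]
      exact integral_congr_ae (ae_of_all _ fun x => by simpa [Pi.add_apply] using hkeyeq x)
    linarith
  have eq1 : ∫ p, ‖p.1 - p.2‖ ^ 2 ∂γ
      = (∫ p, ‖p.1‖^2 ∂γ) + (∫ p, ‖p.2‖^2 ∂γ) - 2 * ∫ p, (inner ℝ p.1 p.2 : ℝ) ∂γ := by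
    have hpt : ∀ p : E × E, ‖p.1 - p.2‖ ^ 2
        = ‖p.1‖^2 + ‖p.2‖^2 - 2*(inner ℝ p.1 p.2 : ℝ) := by
      intro p; rw [@norm_sub_sq_real]; ring
    have h1 : ∫ p, ‖p.1 - p.2‖ ^ 2 ∂γ
        = ∫ p, (‖p.1‖^2 + ‖p.2‖^2 - 2*(inner ℝ p.1 p.2 : ℝ)) ∂γ :=
      integral_congr_ae (ae_of_all _ hpt)
    have iSum : Integrable (fun p : E × E => ‖p.1‖^2 + ‖p.2‖^2) γ := i_n1γ.add i_n2γ
    have h2 : ∫ p, (‖p.1‖^2 + ‖p.2‖^2 - 2*(inner ℝ p.1 p.2 : ℝ)) ∂γ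
        = (∫ p, (‖p.1‖^2 + ‖p.2‖^2) ∂γ) - ∫ p, 2*(inner ℝ p.1 p.2 : ℝ) ∂γ :=
      integral_sub iSum (i_ipγ.const_mul 2)
    have h3 : ∫ p, (‖p.1‖^2 + ‖p.2‖^2) ∂γ = (∫ p, ‖p.1‖^2 ∂γ) + ∫ p, ‖p.2‖^2 ∂γ :=
      integral_add i_n1γ i_n2γ
    have h4 : ∫ p, 2*(inner ℝ p.1 p.2 : ℝ) ∂γ = 2 * ∫ p, (inner ℝ p.1 p.2 : ℝ) ∂γ :=
      integral_const_mul 2 _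
    rw [h1, h2, h3, h4]
  have eqK : ∫ x, ‖S₁ x - S₂ x‖^2 ∂μ
      = (∫ x, ‖S₁ x‖^2 ∂μ) + (∫ x, ‖S₂ x‖^2 ∂μ)
        - 2 * ∫ x, (inner ℝ (S₁ x) (S₂ x) : ℝ) ∂μ := by
    have hpt : ∀ x : E, ‖S₁ x - S₂ x‖ ^ 2
        = ‖S₁ x‖^2 + ‖S₂ x‖^2 - 2*(inner ℝ (S₁ x) (S₂ x) : ℝ) := by
      intro x; rw [@norm_sub_sq_real]; ring
    have h1 : ∫ x, ‖S₁ x - S₂ x‖ ^ 2 ∂μ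
        = ∫ x, (‖S₁ x‖^2 + ‖S₂ x‖^2 - 2*(inner ℝ (S₁ x) (S₂ x) : ℝ)) ∂μ :=
      integral_congr_ae (ae_of_all _ hpt)
    have iSum : Integrable (fun x : E => ‖S₁ x‖^2 + ‖S₂ x‖^2) μ := i_S1sq.add i_S2sq
    have h2 : ∫ x, (‖S₁ x‖^2 + ‖S₂ x‖^2 - 2*(inner ℝ (S₁ x) (S₂ x) : ℝ)) ∂μ
        = (∫ x, (‖S₁ x‖^2 + ‖S₂ x‖^2) ∂μ) - ∫ x, 2*(inner ℝ (S₁ x) (S₂ x) : ℝ) ∂μ :=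
      integral_sub iSum (i_SS.const_mul 2)
    have h3 : ∫ x, (‖S₁ x‖^2 + ‖S₂ x‖^2) ∂μ = (∫ x, ‖S₁ x‖^2 ∂μ) + ∫ x, ‖S₂ x‖^2 ∂μ :=
      integral_add i_S1sq i_S2sq
    have h4 : ∫ x, 2*(inner ℝ (S₁ x) (S₂ x) : ℝ) ∂μ = 2 * ∫ x, (inner ℝ (S₁ x) (S₂ x) : ℝ) ∂μ :=
      integral_const_mul 2 _
    rw [h1, h2, h3, h4]
  have hi1 : ∫ p, ‖p.1‖^2 ∂γ = ∫ x, ‖S₁ x‖^2 ∂μ :=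
    e_fst _ (measurable_norm.pow_const 2)
  have hi2 : ∫ p, ‖p.2‖^2 ∂γ = ∫ x, ‖S₂ x‖^2 ∂μ :=
    e_snd _ (measurable_norm.pow_const 2)
  linarith [hinle, eq1, eqK, hi1, hi2]



end Aux

/-- With `A = ∫ ‖x‖² dμ`, `B = ∫ ⟨x, T x⟩ dμ`, `C = ∫ ‖T x‖² dμ`, the
infimum of `∫ ‖x - y‖² dγ` over couplings `γ` of `(S₁)_#μ` and `(S₂)_#μ` (where
`Sⱼ x = aⱼ x + bⱼ T x`, `aⱼ, bⱼ ≥ 0`) equals the fixed quadratic form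
`(a₁-a₂)² A + 2 (a₁-a₂)(b₁-b₂) B + (b₁-b₂)² C` in the coordinate differences. -/
theorem transport_cost_quadratic_form_on_filling_cone
    (d : ℕ) (μ : Measure (EuclideanSpace ℝ (Fin d))) [IsProbabilityMeasure μ]
    (hμ2 : ∫⁻ x, ENNReal.ofReal (‖x‖ ^ 2) ∂μ < ⊤)
    (φ : EuclideanSpace ℝ (Fin d) → ℝ)
    (hconv : ConvexOn ℝ Set.univ φ) (hdiff : Differentiable ℝ φ)
    (hTmeas : Measurable fun x => gradient φ x)
    (hT2 : ∫⁻ x, ENNReal.ofReal (‖gradient φ x‖ ^ 2) ∂μ < ⊤)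
    (A B C : ℝ)
    (hA : A = ∫ x, ‖x‖ ^ 2 ∂μ)
    (hB : B = ∫ x, (inner ℝ x (gradient φ x) : ℝ) ∂μ)
    (hC : C = ∫ x, ‖gradient φ x‖ ^ 2 ∂μ)
    (a₁ b₁ a₂ b₂ : ℝ) (ha₁ : 0 ≤ a₁) (hb₁ : 0 ≤ b₁) (ha₂ : 0 ≤ a₂) (hb₂ : 0 ≤ b₂)
    (S₁ S₂ : EuclideanSpace ℝ (Fin d) → EuclideanSpace ℝ (Fin d))
    (hS₁ : ∀ x, S₁ x = a₁ • x + b₁ • gradient φ x)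
    (hS₂ : ∀ x, S₂ x = a₂ • x + b₂ • gradient φ x) :
    sInf {c : ℝ≥0∞ |
        ∃ γ : Measure (EuclideanSpace ℝ (Fin d) × EuclideanSpace ℝ (Fin d)),
          IsProbabilityMeasure γ ∧ γ.map Prod.fst = μ.map S₁ ∧
          γ.map Prod.snd = μ.map S₂ ∧
          c = ∫⁻ p, ENNReal.ofReal (‖p.1 - p.2‖ ^ 2) ∂γ}
      = ENNReal.ofReal
          ((a₁ - a₂) ^ 2 * A + 2 * (a₁ - a₂) * (b₁ - b₂) * B + (b₁ - b₂) ^ 2 * C) := by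
  rw [transport_cost_general μ hμ2 φ hconv hdiff hTmeas hT2 a₁ b₁ a₂ b₂ ha₁ hb₁ ha₂ hb₂
    S₁ S₂ hS₁ hS₂]
  congr 1
  have i_nx2 : Integrable (fun x : EuclideanSpace ℝ (Fin d) => ‖x‖ ^ 2) μ :=
    ⟨(measurable_norm.pow_const 2).aestronglyMeasurable,
      (hasFiniteIntegral_iff_ofReal (ae_of_all _ fun x => by positivity)).2 hμ2⟩
  have i_nT2 : Integrable (fun x : EuclideanSpace ℝ (Fin d) => ‖gradient φ x‖ ^ 2) μ :=
    ⟨(hTmeas.norm.pow_const 2).aestronglyMeasurable,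
      (hasFiniteIntegral_iff_ofReal (ae_of_all _ fun x => by positivity)).2 hT2⟩
  have i_xT : Integrable
      (fun x : EuclideanSpace ℝ (Fin d) => (inner ℝ x (gradient φ x) : ℝ)) μ := by
    refine Integrable.mono' (i_nx2.add i_nT2)
      ((measurable_id.inner hTmeas).aestronglyMeasurable) (ae_of_all _ fun x => ?_)
    simp only [Pi.add_apply]
    have h1 := abs_real_inner_le_norm (x : EuclideanSpace ℝ (Fin d)) (gradient φ x)
    have h2 : ‖x‖ * ‖gradient φ x‖ ≤ ‖x‖ ^ 2 + ‖gradient φ x‖ ^ 2 := by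
      nlinarith [sq_nonneg (‖x‖ - ‖gradient φ x‖), norm_nonneg x, norm_nonneg (gradient φ x)]
    calc ‖(inner ℝ x (gradient φ x) : ℝ)‖ = |(inner ℝ x (gradient φ x) : ℝ)| := rfl
      _ ≤ ‖x‖ * ‖gradient φ x‖ := h1
      _ ≤ ‖x‖ ^ 2 + ‖gradient φ x‖ ^ 2 := h2
  have hcost_eq : ∀ x : EuclideanSpace ℝ (Fin d), ‖S₁ x - S₂ x‖ ^ 2
      = (a₁ - a₂)^2*‖x‖^2 + 2*(a₁-a₂)*(b₁-b₂)*(inner ℝ x (gradient φ x) : ℝ)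
        + (b₁-b₂)^2*‖gradient φ x‖^2 := by
    intro x
    have hd : S₁ x - S₂ x = (a₁ - a₂) • x + (b₁ - b₂) • gradient φ x := by
      rw [hS₁ x, hS₂ x]; module
    rw [hd, @norm_add_sq_real, norm_smul, norm_smul, real_inner_smul_left,
      real_inner_smul_right]
    simp only [Real.norm_eq_abs, mul_pow, sq_abs]
    ring
  have iA : Integrable (fun x : EuclideanSpace ℝ (Fin d) => (a₁-a₂)^2*‖x‖^2) μ :=
    i_nx2.const_mul _
  have iB : Integrable (fun x : EuclideanSpace ℝ (Fin d) =>
      2*(a₁-a₂)*(b₁-b₂)*(inner ℝ x (gradient φ x) : ℝ)) μ := i_xT.const_mul _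
  have iC : Integrable (fun x : EuclideanSpace ℝ (Fin d) =>
      (b₁-b₂)^2*‖gradient φ x‖^2) μ := i_nT2.const_mul _
  have iAB : Integrable (fun x : EuclideanSpace ℝ (Fin d) =>
      (a₁-a₂)^2*‖x‖^2 + 2*(a₁-a₂)*(b₁-b₂)*(inner ℝ x (gradient φ x) : ℝ)) μ := iA.add iB
  have h1 : ∫ x, ‖S₁ x - S₂ x‖ ^ 2 ∂μ
      = ∫ x, ((a₁-a₂)^2*‖x‖^2 + 2*(a₁-a₂)*(b₁-b₂)*(inner ℝ x (gradient φ x) : ℝ)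
          + (b₁-b₂)^2*‖gradient φ x‖^2) ∂μ :=
    integral_congr_ae (ae_of_all _ hcost_eq)
  have h2 : ∫ x, ((a₁-a₂)^2*‖x‖^2 + 2*(a₁-a₂)*(b₁-b₂)*(inner ℝ x (gradient φ x) : ℝ)
        + (b₁-b₂)^2*‖gradient φ x‖^2) ∂μ
      = (∫ x, ((a₁-a₂)^2*‖x‖^2 + 2*(a₁-a₂)*(b₁-b₂)*(inner ℝ x (gradient φ x) : ℝ)) ∂μ)
        + ∫ x, (b₁-b₂)^2*‖gradient φ x‖^2 ∂μ := integral_add iAB iC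
  have h3 : ∫ x, ((a₁-a₂)^2*‖x‖^2 + 2*(a₁-a₂)*(b₁-b₂)*(inner ℝ x (gradient φ x) : ℝ)) ∂μ
      = (∫ x, (a₁-a₂)^2*‖x‖^2 ∂μ)
        + ∫ x, 2*(a₁-a₂)*(b₁-b₂)*(inner ℝ x (gradient φ x) : ℝ) ∂μ := integral_add iA iB
  have h4 : ∫ x, (a₁-a₂)^2*‖x‖^2 ∂μ = (a₁-a₂)^2 * ∫ x, ‖x‖^2 ∂μ :=
    integral_const_mul _ _
  have h5 : ∫ x, 2*(a₁-a₂)*(b₁-b₂)*(inner ℝ x (gradient φ x) : ℝ) ∂μ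
      = 2*(a₁-a₂)*(b₁-b₂) * ∫ x, (inner ℝ x (gradient φ x) : ℝ) ∂μ :=
    integral_const_mul _ _
  have h6 : ∫ x, (b₁-b₂)^2*‖gradient φ x‖^2 ∂μ
      = (b₁-b₂)^2 * ∫ x, ‖gradient φ x‖^2 ∂μ := integral_const_mul _ _
  rw [h1, h2, h3, h4, h5, h6, hA, hB, hC]
end

section
/- Let n ≥ 2 and let x_1 ≤ ⋯ ≤ x_n be real numbers. Let z_1 ≤ ⋯ ≤ z_{n−1} be real numbers with Φ(z_i) = i/n for i = 1, …, n−1. Set l := Σ_{i=1}^{n−1} (x_{i+1} − x_i) φ(z_i) and σ_μ := √((1/n) Σ_{i=1}^{n} x_i²). Then 0 ≤ l ≤ σ_μ; in particular the relative Wasserstein angle θ = arccos(l/σ_μ) is well-defined and lies in [0, π/2] whenever σ_μ > 0. -/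
open MeasureTheory

/-- The standard normal density `φ(z) = (2π)^{-1/2} exp(-z²/2)`. -/
noncomputable def stdGaussianPDF (z : ℝ) : ℝ :=
  (Real.sqrt (2 * Real.pi))⁻¹ * Real.exp (-z ^ 2 / 2)

/-- The standard normal cumulative distribution function `Φ(t) = ∫_{-∞}^t φ(z) dz`. -/
noncomputable def stdGaussianCDF (t : ℝ) : ℝ :=
  ∫ z in Set.Iic t, stdGaussianPDF z

open Real Filter Set

lemma stdG_eq : stdGaussianPDF = fun t : ℝ =>
    (Real.sqrt (2 * Real.pi))⁻¹ * Real.exp (-(1/2) * t ^ 2) := by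
  funext t
  rw [stdGaussianPDF, show -t ^ 2 / 2 = -(1/2) * t ^ 2 by ring]

lemma stdG_nonneg (t : ℝ) : 0 ≤ stdGaussianPDF t := by
  rw [stdGaussianPDF]; positivity

lemma integrable_stdG : Integrable stdGaussianPDF := by
  rw [stdG_eq]
  exact (integrable_exp_neg_mul_sq (by norm_num : (0:ℝ) < 1/2)).const_mul _

lemma integrable_t_stdG : Integrable (fun t => t * stdGaussianPDF t) := by
  have h := (integrable_mul_exp_neg_mul_sq (by norm_num : (0:ℝ) < 1/2)).const_mul
    ((Real.sqrt (2 * Real.pi))⁻¹)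
  refine h.congr ?_
  filter_upwards with t
  rw [stdG_eq]; ring

lemma integrable_t2_stdG : Integrable (fun t => t ^ 2 * stdGaussianPDF t) := by
  have h := (integrable_rpow_mul_exp_neg_mul_sq (by norm_num : (0:ℝ) < 1/2)
    (by norm_num : (-1:ℝ) < 2)).const_mul ((Real.sqrt (2 * Real.pi))⁻¹)
  refine h.congr ?_
  filter_upwards with t
  rw [stdG_eq, show (2:ℝ) = ((2:ℕ):ℝ) by norm_num, Real.rpow_natCast]
  ring

lemma integral_stdG : ∫ t, stdGaussianPDF t = 1 := by
  rw [stdG_eq, MeasureTheory.integral_const_mul, integral_gaussian]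
  rw [show π / (1/2) = 2 * π by ring]
  rw [inv_mul_cancel₀]
  positivity

lemma hasDerivAt_stdG (t : ℝ) :
    HasDerivAt stdGaussianPDF (-t * stdGaussianPDF t) t := by
  have h1 : HasDerivAt (fun s : ℝ => -s ^ 2 / 2) (-t) t := by
    have := ((hasDerivAt_pow 2 t).neg).div_const 2
    refine this.congr_deriv ?_
    simp; ring
  have h2 := (h1.exp).const_mul ((Real.sqrt (2 * Real.pi))⁻¹)
  have h3 : stdGaussianPDF = fun s : ℝ => (Real.sqrt (2 * Real.pi))⁻¹ * Real.exp (-s ^ 2 / 2) := rfl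
  rw [h3]
  refine h2.congr_deriv ?_
  simp only [stdGaussianPDF]; ring

lemma hasDerivAt_negG (t : ℝ) :
    HasDerivAt (fun s => -stdGaussianPDF s) (t * stdGaussianPDF t) t := by
  have := (hasDerivAt_stdG t).neg
  exact this.congr_deriv (by ring)

lemma hasDerivAt_negTG (t : ℝ) :
    HasDerivAt (fun s => -s * stdGaussianPDF s)
      (t ^ 2 * stdGaussianPDF t - stdGaussianPDF t) t := by
  have := ((hasDerivAt_id t).neg).mul (hasDerivAt_stdG t)
  refine this.congr_deriv ?_
  simp only [Pi.neg_apply, id]; ring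

lemma tendsto_stdG_atTop : Tendsto stdGaussianPDF atTop (nhds 0) := by
  have h1 : Tendsto (fun t : ℝ => -t ^ 2 / 2) atTop atBot := by
    apply Filter.Tendsto.atBot_div_const (by norm_num : (0:ℝ) < 2)
    exact (tendsto_neg_atTop_atBot).comp (tendsto_pow_atTop two_ne_zero)
  have h2 := (Real.tendsto_exp_atBot).comp h1
  have h4 : Tendsto (fun t : ℝ => (Real.sqrt (2 * Real.pi))⁻¹ * Real.exp (-t ^ 2 / 2))
      atTop (nhds ((Real.sqrt (2 * Real.pi))⁻¹ * 0)) := h2.const_mul _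
  rw [mul_zero] at h4
  exact h4

lemma stdG_neg (t : ℝ) : stdGaussianPDF (-t) = stdGaussianPDF t := by
  simp [stdGaussianPDF]

lemma tendsto_stdG_atBot : Tendsto stdGaussianPDF atBot (nhds 0) := by
  have := tendsto_stdG_atTop.comp tendsto_neg_atBot_atTop
  refine this.congr fun t => stdG_neg t

lemma tendsto_t_stdG_atTop : Tendsto (fun t => t * stdGaussianPDF t) atTop (nhds 0) := by
  have hc : (0:ℝ) < (Real.sqrt (2 * Real.pi))⁻¹ := by positivity
  apply squeeze_zero_norm' (a := fun t : ℝ => 2 * (Real.sqrt (2 * Real.pi))⁻¹ / t)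
  · filter_upwards [eventually_ge_atTop (1:ℝ)] with t ht
    have hE : 0 < Real.exp (t ^ 2 / 2) := Real.exp_pos _
    have h1 : t ^ 2 / 2 + 1 ≤ Real.exp (t ^ 2 / 2) := Real.add_one_le_exp _
    have ht0 : (0:ℝ) < t := by linarith
    rw [Real.norm_eq_abs, abs_of_nonneg (mul_nonneg ht0.le (by rw [stdGaussianPDF]; positivity))]
    rw [stdGaussianPDF, show -t ^ 2 / 2 = -(t ^ 2 / 2) by ring, Real.exp_neg]
    have key : t ^ 2 * (Real.exp (t ^ 2 / 2))⁻¹ ≤ 2 := by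
      rw [mul_inv_le_iff₀ hE]
      nlinarith
    rw [le_div_iff₀ ht0,
      show t * ((Real.sqrt (2 * Real.pi))⁻¹ * (Real.exp (t ^ 2 / 2))⁻¹) * t
        = (Real.sqrt (2 * Real.pi))⁻¹ * (t ^ 2 * (Real.exp (t ^ 2 / 2))⁻¹) by ring,
      mul_comm (2:ℝ) ((Real.sqrt (2 * Real.pi))⁻¹)]
    exact mul_le_mul_of_nonneg_left key hc.le
  · exact Tendsto.div_atTop tendsto_const_nhds tendsto_id

lemma tendsto_t_stdG_atBot : Tendsto (fun t => t * stdGaussianPDF t) atBot (nhds 0) := by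
  have := (tendsto_t_stdG_atTop.comp tendsto_neg_atBot_atTop).neg
  rw [neg_zero] at this
  refine this.congr fun t => ?_
  simp [Function.comp, stdG_neg]

lemma integral_Iic_t_stdG (a : ℝ) :
    ∫ t in Set.Iic a, t * stdGaussianPDF t = -stdGaussianPDF a := by
  have := MeasureTheory.integral_Iic_of_hasDerivAt_of_tendsto'
    (f := fun s => -stdGaussianPDF s) (f' := fun t => t * stdGaussianPDF t) (a := a)
    (fun x _ => hasDerivAt_negG x) integrable_t_stdG.integrableOn
    (tendsto_stdG_atBot.neg.congr (fun t => rfl) |>.mono_right (by rw [neg_zero]))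
  simpa using this

lemma integral_Ioi_t_stdG (a : ℝ) :
    ∫ t in Set.Ioi a, t * stdGaussianPDF t = stdGaussianPDF a := by
  have := MeasureTheory.integral_Ioi_of_hasDerivAt_of_tendsto'
    (f := fun s => -stdGaussianPDF s) (f' := fun t => t * stdGaussianPDF t) (a := a)
    (fun x _ => hasDerivAt_negG x) integrable_t_stdG.integrableOn
    (tendsto_stdG_atTop.neg.congr (fun t => rfl) |>.mono_right (by rw [neg_zero]))
  simpa using this

lemma integral_Ioc_t_stdG {a b : ℝ} (hab : a ≤ b) :
    ∫ t in Set.Ioc a b, t * stdGaussianPDF t = stdGaussianPDF a - stdGaussianPDF b := by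
  rw [← intervalIntegral.integral_of_le hab]
  rw [intervalIntegral.integral_eq_sub_of_hasDerivAt (f := fun s => -stdGaussianPDF s)
    (fun x _ => hasDerivAt_negG x) (integrable_t_stdG.intervalIntegrable)]
  ring

lemma iic_union_split {a b : ℝ} (hab : a ≤ b) (f : ℝ → ℝ) (hf : Integrable f) :
    ∫ t in Set.Ioc a b, f t = (∫ t in Set.Iic b, f t) - ∫ t in Set.Iic a, f t := by
  have hdisj : Disjoint (Set.Iic a) (Set.Ioc a b) := by
    rw [Set.disjoint_left]
    rintro x hx ⟨h1, _⟩
    exact absurd hx (not_le.2 h1)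
  have := MeasureTheory.setIntegral_union hdisj measurableSet_Ioc
    hf.integrableOn hf.integrableOn (f := f) (μ := volume)
  rw [Set.Iic_union_Ioc_eq_Iic hab] at this
  rw [this]; ring

lemma ioi_split (a : ℝ) (f : ℝ → ℝ) (hf : Integrable f) :
    ∫ t in Set.Ioi a, f t = (∫ t, f t) - ∫ t in Set.Iic a, f t := by
  have hdisj : Disjoint (Set.Iic a) (Set.Ioi a) := by
    rw [Set.disjoint_left]
    rintro x hx h1
    exact absurd (Set.mem_Iic.mp hx) (not_le.2 h1)
  have := MeasureTheory.setIntegral_union hdisj measurableSet_Ioi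
    hf.integrableOn hf.integrableOn (f := f) (μ := volume)
  rw [Set.Iic_union_Ioi] at this
  rw [MeasureTheory.setIntegral_univ] at this
  rw [this]; ring

lemma integral_t2_stdG : ∫ t, t ^ 2 * stdGaussianPDF t = 1 := by
  have hint : Integrable (fun t => t ^ 2 * stdGaussianPDF t - stdGaussianPDF t) :=
    integrable_t2_stdG.sub integrable_stdG
  have hIic : ∫ t in Set.Iic (0:ℝ), (t ^ 2 * stdGaussianPDF t - stdGaussianPDF t) = 0 := by
    have := MeasureTheory.integral_Iic_of_hasDerivAt_of_tendsto'
      (f := fun s => -s * stdGaussianPDF s)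
      (f' := fun t => t ^ 2 * stdGaussianPDF t - stdGaussianPDF t) (a := 0)
      (fun x _ => hasDerivAt_negTG x) hint.integrableOn
      ((tendsto_t_stdG_atBot.neg).congr (fun t => by ring) |>.mono_right (by rw [neg_zero]))
    simpa using this
  have hIoi : ∫ t in Set.Ioi (0:ℝ), (t ^ 2 * stdGaussianPDF t - stdGaussianPDF t) = 0 := by
    have := MeasureTheory.integral_Ioi_of_hasDerivAt_of_tendsto'
      (f := fun s => -s * stdGaussianPDF s)
      (f' := fun t => t ^ 2 * stdGaussianPDF t - stdGaussianPDF t) (a := 0)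
      (fun x _ => hasDerivAt_negTG x) hint.integrableOn
      ((tendsto_t_stdG_atTop.neg).congr (fun t => by ring) |>.mono_right (by rw [neg_zero]))
    simpa using this
  have hsplit := ioi_split 0 _ hint
  rw [hIoi, hIic, sub_zero] at hsplit
  have : ∫ t, (t ^ 2 * stdGaussianPDF t - stdGaussianPDF t) = 0 := hsplit.symm
  rw [MeasureTheory.integral_sub integrable_t2_stdG integrable_stdG, integral_stdG] at this
  linarith

/-- Cauchy-Schwarz for the Gaussian weight on a measurable set. -/
lemma gauss_cs {s : Set ℝ} (hs : MeasurableSet s) :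
    (∫ t in s, t * stdGaussianPDF t) ^ 2 ≤
      (∫ t in s, stdGaussianPDF t) * ∫ t in s, t ^ 2 * stdGaussianPDF t := by
  set A := ∫ t in s, stdGaussianPDF t with hA
  set B := ∫ t in s, t * stdGaussianPDF t with hB
  set C := ∫ t in s, t ^ 2 * stdGaussianPDF t with hC
  have key : ∀ r : ℝ, 0 ≤ A * (r * r) + (-2 * B) * r + C := by
    intro r
    have h0 : 0 ≤ ∫ t in s, (t - r) ^ 2 * stdGaussianPDF t :=
      MeasureTheory.setIntegral_nonneg hs fun t _ => mul_nonneg (sq_nonneg _) (stdG_nonneg t)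
    have hexp : ∫ t in s, (t - r) ^ 2 * stdGaussianPDF t
        = C - 2 * r * B + r ^ 2 * A := by
      have : (fun t => (t - r) ^ 2 * stdGaussianPDF t)
          = fun t => (t ^ 2 * stdGaussianPDF t - 2 * r * (t * stdGaussianPDF t))
              + r ^ 2 * stdGaussianPDF t := by
        funext t; ring
      have h1 : IntegrableOn
          (fun t => t ^ 2 * stdGaussianPDF t - 2 * r * (t * stdGaussianPDF t)) s := by
        exact (integrable_t2_stdG.integrableOn).sub ((integrable_t_stdG.integrableOn).const_mul _)
      have h2 : IntegrableOn (fun t => r ^ 2 * stdGaussianPDF t) s := by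
        exact (integrable_stdG.integrableOn).const_mul _
      have h3 : IntegrableOn (fun t => 2 * r * (t * stdGaussianPDF t)) s := by
        exact (integrable_t_stdG.integrableOn).const_mul _
      rw [this, MeasureTheory.integral_add h1 h2,
        MeasureTheory.integral_sub integrable_t2_stdG.integrableOn h3,
        integral_const_mul, integral_const_mul]
    nlinarith [h0, hexp]
  have hd := discrim_le_zero key
  rw [discrim] at hd
  nlinarith [hd]

/-- For sorted reals `x 1 ≤ ⋯ ≤ x n`, Gaussian quantiles
`z 1 ≤ ⋯ ≤ z (n-1)` with `Φ (z i) = i/n`, projection length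
`l = Σ (x (i+1) - x i) φ(z i)` and scale `σ_μ = √((1/n) Σ (x i)²)`, one has
`0 ≤ l ≤ σ_μ`; in particular, whenever `σ_μ > 0`, the relative Wasserstein angle
`θ = arccos (l / σ_μ)` lies in `[0, π/2]`. -/
theorem projection_length_nonneg_le_scale
    (n : ℕ) (hn : 2 ≤ n) (x : ℕ → ℝ)
    (hxmono : ∀ i, 1 ≤ i → i < n → x i ≤ x (i + 1))
    (z : ℕ → ℝ)
    (hzmono : ∀ i, 1 ≤ i → i + 1 ≤ n - 1 → z i ≤ z (i + 1))
    (hz : ∀ i, 1 ≤ i → i ≤ n - 1 → stdGaussianCDF (z i) = (i : ℝ) / n)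
    (l : ℝ) (hl : l = ∑ i ∈ Finset.Icc 1 (n - 1), (x (i + 1) - x i) * stdGaussianPDF (z i))
    (σμ : ℝ) (hσμ : σμ = Real.sqrt ((1 / (n : ℝ)) * ∑ i ∈ Finset.Icc 1 n, (x i) ^ 2)) :
    0 ≤ l ∧ l ≤ σμ
      ∧ (0 < σμ → Real.arccos (l / σμ) ∈ Set.Icc 0 (Real.pi / 2)) := by
  have npos : (0:ℝ) < n := by
    have : (0:ℕ) < n := by omega
    exact_mod_cast this
  have hΦ : ∀ i, 1 ≤ i → i ≤ n - 1 →
      ∫ t in Set.Iic (z i), stdGaussianPDF t = (i:ℝ) / n := fun i h1 h2 => hz i h1 h2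
  -- the discrete weights and the running second moment
  set W : ℕ → ℝ := fun i => if 1 ≤ i ∧ i ≤ n - 1 then stdGaussianPDF (z i) else 0 with hW
  set T : ℕ → ℝ := fun i => if i = 0 then 0 else
      if i ≤ n - 1 then ∫ t in Set.Iic (z i), t ^ 2 * stdGaussianPDF t else 1 with hT
  have hW0 : W 0 = 0 := by simp [hW]
  have hWn : W n = 0 := by
    have h : ¬ (1 ≤ n ∧ n ≤ n - 1) := by omega
    simp [hW, h]
  have hWmid : ∀ i, 1 ≤ i → i ≤ n - 1 → W i = stdGaussianPDF (z i) := by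
    intro i h1 h2; simp [hW, h1, h2]
  have hT0 : T 0 = 0 := by simp [hT]
  have hTn : T n = 1 := by
    have h0 : n ≠ 0 := by omega
    have h1 : ¬ (n ≤ n - 1) := by omega
    simp [hT, h0, h1]
  have hTmid : ∀ i, 1 ≤ i → i ≤ n - 1 →
      T i = ∫ t in Set.Iic (z i), t ^ 2 * stdGaussianPDF t := by
    intro i h1 h2
    have h0 : i ≠ 0 := by omega
    simp [hT, h0, h2]
  -- the key per-interval Cauchy-Schwarz estimate
  have key : ∀ k, k < n → (W k - W (k + 1)) ^ 2 ≤ (1 / n) * (T (k + 1) - T k) := by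
    intro k hk
    rcases Nat.eq_zero_or_pos k with rfl | hk1
    · -- k = 0 : the interval (-∞, z 1]
      have h1n : 1 ≤ n - 1 := by omega
      have hcs := gauss_cs (measurableSet_Iic (a := z 1))
      rw [integral_Iic_t_stdG, hΦ 1 le_rfl h1n] at hcs
      rw [hW0, hWmid 1 le_rfl h1n, hTmid 1 le_rfl h1n, hT0]
      calc (0 - stdGaussianPDF (z 1)) ^ 2
          = (-stdGaussianPDF (z 1)) ^ 2 := by ring
        _ ≤ ((1:ℕ):ℝ) / n * ∫ t in Set.Iic (z 1), t ^ 2 * stdGaussianPDF t := hcs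
        _ = 1 / n * ((∫ t in Set.Iic (z 1), t ^ 2 * stdGaussianPDF t) - 0) := by
            push_cast; ring
    · by_cases hkn : k + 1 = n
      · -- k = n - 1 : the interval (z (n-1), ∞)
        have hkeq : k = n - 1 := by omega
        have hcs := gauss_cs (measurableSet_Ioi (a := z k))
        rw [integral_Ioi_t_stdG,
          ioi_split (z k) _ integrable_stdG, integral_stdG,
          ioi_split (z k) _ integrable_t2_stdG, integral_t2_stdG,
          hΦ k hk1 (by omega)] at hcs
        have hWk : W k = stdGaussianPDF (z k) := hWmid k hk1 (by omega)
        have hTk : T k = ∫ t in Set.Iic (z k), t ^ 2 * stdGaussianPDF t :=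
          hTmid k hk1 (by omega)
        rw [hkn, hWk, hWn, hTn, hTk]
        have hcast : ((k:ℝ)) = (n:ℝ) - 1 := by
          have : ((k:ℕ):ℝ) = ((n - 1 : ℕ) : ℝ) := by rw [hkeq]
          rw [this, Nat.cast_sub (by omega), Nat.cast_one]
        have h1 : 1 - (k:ℝ) / n = 1 / n := by
          rw [hcast]; field_simp; ring
        rw [h1] at hcs
        calc (stdGaussianPDF (z k) - 0) ^ 2
            = (stdGaussianPDF (z k)) ^ 2 := by ring
          _ ≤ 1 / n * (1 - ∫ t in Set.Iic (z k), t ^ 2 * stdGaussianPDF t) := hcs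
      · -- the middle intervals (z k, z (k+1)]
        have hk2 : k + 1 ≤ n - 1 := by omega
        have hzk : z k ≤ z (k + 1) := hzmono k hk1 hk2
        have hcs := gauss_cs (measurableSet_Ioc (a := z k) (b := z (k + 1)))
        rw [integral_Ioc_t_stdG hzk,
          iic_union_split hzk _ integrable_stdG,
          iic_union_split hzk _ integrable_t2_stdG,
          hΦ k hk1 (by omega), hΦ (k + 1) (by omega) hk2] at hcs
        have h1 : ((k + 1 : ℕ):ℝ) / n - (k:ℝ) / n = 1 / n := by
          push_cast; field_simp; ring
        rw [h1] at hcs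
        rw [hWmid k hk1 (by omega), hWmid (k + 1) (by omega) hk2,
          hTmid (k + 1) (by omega) hk2, hTmid k hk1 (by omega)]
        exact hcs
  -- summing up: the total squared weight is at most 1/n
  have sum_sq : ∑ k ∈ Finset.range n, (W k - W (k + 1)) ^ 2 ≤ 1 / n := by
    calc ∑ k ∈ Finset.range n, (W k - W (k + 1)) ^ 2
        ≤ ∑ k ∈ Finset.range n, (1 / n) * (T (k + 1) - T k) :=
          Finset.sum_le_sum fun k hk => key k (Finset.mem_range.mp hk)
      _ = (1 / n) * ∑ k ∈ Finset.range n, (T (k + 1) - T k) := by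
          rw [Finset.mul_sum]
      _ = (1 / n) * (T n - T 0) := by rw [Finset.sum_range_sub]
      _ = 1 / n := by rw [hTn, hT0]; ring
  -- rewriting l by summation by parts
  have hl2 : l = ∑ k ∈ Finset.range n, x (k + 1) * (W k - W (k + 1)) := by
    have hIcc : Finset.Icc 1 (n - 1) = Finset.Ico 1 n := by
      rw [← Finset.Ico_add_one_right_eq_Icc]
      congr 1
      omega
    have e1 : l = ∑ j ∈ Finset.range (n - 1), (x (1 + j + 1) - x (1 + j)) * W (1 + j) := by
      rw [hl, hIcc, Finset.sum_Ico_eq_sum_range]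
      refine Finset.sum_congr rfl fun j hj => ?_
      rw [hWmid (1 + j) (by omega) (by have := Finset.mem_range.mp hj; omega)]
    have e2 : ∑ k ∈ Finset.range n, x (k + 1) * W k
        = ∑ j ∈ Finset.range (n - 1), x (1 + j + 1) * W (1 + j) := by
      have := Finset.sum_range_succ' (fun k => x (k + 1) * W k) (n - 1)
      rw [show n - 1 + 1 = n by omega] at this
      rw [this, hW0]
      simp [add_comm]
    have e3 : ∑ k ∈ Finset.range n, x (k + 1) * W (k + 1)
        = ∑ j ∈ Finset.range (n - 1), x (1 + j) * W (1 + j) := by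
      have := Finset.sum_range_succ (fun k => x (k + 1) * W (k + 1)) (n - 1)
      rw [show n - 1 + 1 = n by omega] at this
      rw [this, hWn]
      simp [add_comm]
    calc l = ∑ j ∈ Finset.range (n - 1),
          (x (1 + j + 1) * W (1 + j) - x (1 + j) * W (1 + j)) := by
            rw [e1]; refine Finset.sum_congr rfl fun j _ => by ring
      _ = (∑ j ∈ Finset.range (n - 1), x (1 + j + 1) * W (1 + j))
          - ∑ j ∈ Finset.range (n - 1), x (1 + j) * W (1 + j) := by
            rw [Finset.sum_sub_distrib]
      _ = (∑ k ∈ Finset.range n, x (k + 1) * W k)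
          - ∑ k ∈ Finset.range n, x (k + 1) * W (k + 1) := by rw [e2, e3]
      _ = ∑ k ∈ Finset.range n, x (k + 1) * (W k - W (k + 1)) := by
            rw [← Finset.sum_sub_distrib]
            refine Finset.sum_congr rfl fun k _ => by ring
  -- nonnegativity of l
  have hl_nonneg : 0 ≤ l := by
    rw [hl]
    refine Finset.sum_nonneg fun i hi => ?_
    obtain ⟨h1, h2⟩ := Finset.mem_Icc.mp hi
    exact mul_nonneg (sub_nonneg.mpr (hxmono i h1 (by omega))) (stdG_nonneg _)
  -- the sum of squares of x over Icc in range form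
  have hx2 : ∑ i ∈ Finset.Icc 1 n, (x i) ^ 2 = ∑ k ∈ Finset.range n, x (k + 1) ^ 2 := by
    rw [← Finset.Ico_add_one_right_eq_Icc, Finset.sum_Ico_eq_sum_range,
      show n + 1 - 1 = n by omega]
    exact Finset.sum_congr rfl fun k _ => by rw [add_comm]
  have hx2nonneg : (0:ℝ) ≤ ∑ k ∈ Finset.range n, x (k + 1) ^ 2 :=
    Finset.sum_nonneg fun k _ => sq_nonneg _
  -- discrete Cauchy-Schwarz
  have hcs2 : l ^ 2 ≤ (∑ k ∈ Finset.range n, x (k + 1) ^ 2) * (1 / n) := by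
    calc l ^ 2 = (∑ k ∈ Finset.range n, x (k + 1) * (W k - W (k + 1))) ^ 2 := by rw [hl2]
      _ ≤ (∑ k ∈ Finset.range n, x (k + 1) ^ 2)
          * ∑ k ∈ Finset.range n, (W k - W (k + 1)) ^ 2 :=
          Finset.sum_mul_sq_le_sq_mul_sq _ _ _
      _ ≤ (∑ k ∈ Finset.range n, x (k + 1) ^ 2) * (1 / n) :=
          mul_le_mul_of_nonneg_left sum_sq hx2nonneg
  have hl_le : l ≤ σμ := by
    have h2 : l ≤ Real.sqrt (l ^ 2) := by
      rw [Real.sqrt_sq_eq_abs]; exact le_abs_self l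
    have h3 : Real.sqrt (l ^ 2) ≤ σμ := by
      rw [hσμ]
      apply Real.sqrt_le_sqrt
      rw [hx2]
      calc l ^ 2 ≤ (∑ k ∈ Finset.range n, x (k + 1) ^ 2) * (1 / n) := hcs2
        _ = 1 / n * ∑ k ∈ Finset.range n, x (k + 1) ^ 2 := by ring
    linarith
  refine ⟨hl_nonneg, hl_le, fun hσ => ?_⟩
  rw [Set.mem_Icc]
  exact ⟨Real.arccos_nonneg _,
    Real.arccos_le_pi_div_two.mpr (div_nonneg hl_nonneg hσ.le)⟩
end
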